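/- The bottom subspace ⊥ and the top subspace ⊤ of H are copyable along δ_e, and if subspaces K and L of H are copyable along δ_e then so is their meet K ⊓ L. Hence the copyable subspaces form a sub-meetsemilattice of the lattice of subspaces of H. -/

import Mathlib

open scoped TensorProduct InnerProductSpace

/-- The orthogonal projection of `H` onto the subspace `K`, regarded as an endomorphism
`P_K : H →ₗ[ℂ] H`. -/
noncomputable def projL {H : Type*} [NormedAddCommGroup H] [InnerProductSpace ℂ H]
    [FiniteDimensional ℂ H] (K : Submodule ℂ H) : H →ₗ[ℂ] H :=
  K.subtype ∘ₗ (K.orthogonalProjectionOnto).toLinearMap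

/-- The classical structure `δ_e : H →ₗ[ℂ] H ⊗[ℂ] H` associated with an orthonormal basis
`e`, determined by `δ_e x = ∑ i, ⟪e i, x⟫_ℂ • (e i ⊗ₜ e i)`. -/
noncomputable def delta {ι H : Type*} [Fintype ι] [NormedAddCommGroup H]
    [InnerProductSpace ℂ H] (e : ι → H) : H →ₗ[ℂ] H ⊗[ℂ] H :=
  ∑ i, (innerSL ℂ (e i)).toLinearMap.smulRight (e i ⊗ₜ[ℂ] e i)

/-- A subspace `K` of `H` is copyable along `δ_e` if `δ_e ∘ₗ P_K = (P_K ⊗ P_K) ∘ₗ δ_e`. -/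
def Copyable {ι H : Type*} [Fintype ι] [NormedAddCommGroup H] [InnerProductSpace ℂ H]
    [FiniteDimensional ℂ H] (e : ι → H) (K : Submodule ℂ H) : Prop :=
  delta e ∘ₗ projL K = TensorProduct.map (projL K) (projL K) ∘ₗ delta e

section Aux

variable {ι H : Type*} [Fintype ι] [NormedAddCommGroup H] [InnerProductSpace ℂ H]
  [FiniteDimensional ℂ H]

omit [FiniteDimensional ℂ H] in
lemma delta_apply (e : ι → H) (x : H) :
    delta e x = ∑ i, ⟪e i, x⟫_ℂ • (e i ⊗ₜ[ℂ] e i) := by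
  simp [delta]

lemma projL_apply (K : Submodule ℂ H) (x : H) :
    projL K x = (K.orthogonalProjectionOnto x : H) := rfl

lemma projL_mem (K : Submodule ℂ H) (x : H) : projL K x ∈ K := (K.orthogonalProjectionOnto x).2

lemma projL_eq_self (K : Submodule ℂ H) {x : H} (hx : x ∈ K) : projL K x = x := by
  rw [projL_apply, ← Submodule.starProjection_apply, Submodule.starProjection_eq_self_iff.mpr hx]

lemma projL_eq_zero (K : Submodule ℂ H) {x : H} (hx : x ∈ Kᗮ) : projL K x = 0 := by
  rw [projL_apply, Submodule.orthogonalProjectionOnto_apply_of_mem_orthogonal hx,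
    Submodule.coe_zero]

variable [DecidableEq ι]

lemma delta_basis (e : OrthonormalBasis ι ℂ H) (j : ι) :
    delta ⇑e (e j) = e j ⊗ₜ[ℂ] e j := by
  rw [delta_apply, Finset.sum_eq_single j]
  · simp [orthonormal_iff_ite.mp e.orthonormal]
  · intro i _ hij
    simp [orthonormal_iff_ite.mp e.orthonormal, hij]
  · simp

lemma copyable_iff (e : OrthonormalBasis ι ℂ H) (K : Submodule ℂ H) :
    Copyable ⇑e K ↔ ∀ j, projL K (e j) = e j ∨ projL K (e j) = 0 := by
  constructor
  · intro h j
    have h1 : delta ⇑e (projL K (e j)) =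
        TensorProduct.map (projL K) (projL K) (delta ⇑e (e j)) :=
      congrFun (congrArg DFunLike.coe h) (e j)
    rw [delta_basis] at h1
    have hrep : ∀ (x : H) (i : ι), e.toBasis.repr x i = ⟪e i, x⟫_ℂ := by
      intro x i
      rw [e.coe_toBasis_repr_apply, e.repr_apply_apply]
    have h3 : ∀ m i : ι, e.toBasis.repr (e m) i = if m = i then 1 else 0 := by
      intro m i
      rw [hrep]
      exact (orthonormal_iff_ite.mp e.orthonormal i m).trans (by simp [eq_comm])
    have hite := orthonormal_iff_ite.mp e.orthonormal
    have key : ∀ i k : ι, (if i = k then ⟪e i, projL K (e j)⟫_ℂ else 0) =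
        ⟪e i, projL K (e j)⟫_ℂ * ⟪e k, projL K (e j)⟫_ℂ := by
      intro i k
      have h2 := congrArg (fun t => (e.toBasis.tensorProduct e.toBasis).repr t (i, k)) h1
      simp only [delta_apply, map_sum, map_smul, TensorProduct.map_tmul,
        Module.Basis.tensorProduct_repr_tmul_apply, Finsupp.coe_finset_sum, Finsupp.coe_smul,
        Finset.sum_apply, Pi.smul_apply, smul_eq_mul, hrep, hite] at h2
      rw [mul_comm] at h2
      rw [← h2]
      by_cases hik : i = k
      · subst hik
        rw [Finset.sum_eq_single i]
        · simp
        · intro b _ hb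
          simp [Ne.symm hb]
        · simp
      · rw [Finset.sum_eq_zero]
        · simp [hik]
        · intro m _
          rcases eq_or_ne i m with rfl | hmi
          · simp [show ¬k = i from fun hh => hik hh.symm]
          · simp [hmi]
    by_cases h0 : projL K (e j) = 0
    · right; exact h0
    · left
      obtain ⟨i, hi⟩ : ∃ i, ⟪e i, projL K (e j)⟫_ℂ ≠ 0 := by
        by_contra hall
        push_neg at hall
        apply h0
        rw [← e.sum_repr (projL K (e j))]
        refine Finset.sum_eq_zero fun i _ => ?_
        rw [e.repr_apply_apply, hall i, zero_smul]
      have hci1 : ⟪e i, projL K (e j)⟫_ℂ = 1 := by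
        have hk := key i i
        rw [if_pos rfl] at hk
        exact (mul_left_cancel₀ hi (by rw [mul_one]; exact hk)).symm
      have hck0 : ∀ k, k ≠ i → ⟪e k, projL K (e j)⟫_ℂ = 0 := by
        intro k hk
        have := key i k
        rw [if_neg (Ne.symm hk), hci1, one_mul] at this
        exact this.symm
      have hP : projL K (e j) = e i := by
        rw [← e.sum_repr (projL K (e j)), Finset.sum_eq_single i]
        · rw [e.repr_apply_apply, hci1, one_smul]
        · intro k _ hk
          rw [e.repr_apply_apply, hck0 k hk, zero_smul]
        · simp
      have hiK : (e i : H) ∈ K := hP ▸ projL_mem K (e j)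
      have hij : i = j := by
        by_contra hij
        have h4 : ⟪projL K (e j), e i⟫_ℂ = ⟪e j, projL K (e i)⟫_ℂ :=
          Submodule.inner_starProjection_left_eq_right K (e j) (e i)
        rw [hP, projL_eq_self K hiK] at h4
        have h5 : ⟪(e i : H), e i⟫_ℂ = 1 := by
          simpa using orthonormal_iff_ite.mp e.orthonormal i i
        have h6 : ⟪(e j : H), e i⟫_ℂ = 0 := by
          simpa [Ne.symm hij] using orthonormal_iff_ite.mp e.orthonormal j i
        rw [h5, h6] at h4
        exact one_ne_zero h4
      rw [hP, hij]
  · intro h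
    apply Module.Basis.ext e.toBasis
    intro j
    rw [LinearMap.comp_apply, LinearMap.comp_apply, e.coe_toBasis, delta_basis]
    rcases h j with hj | hj
    · rw [hj, delta_basis, TensorProduct.map_tmul, hj]
    · rw [hj, map_zero, TensorProduct.map_tmul, hj, TensorProduct.zero_tmul]

end Aux

/-- The trivial subspaces `⊥` and `⊤` are copyable along `δ_e`, and copyable subspaces are
closed under meet; hence copyable subspaces form a sub-meetsemilattice of the subspace
lattice of `H`. -/
theorem copyable_bot_top_and_inf
    {ι H : Type*} [Fintype ι] [NormedAddCommGroup H] [InnerProductSpace ℂ H]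
    [FiniteDimensional ℂ H] (e : OrthonormalBasis ι ℂ H) :
    Copyable (⇑e) (⊥ : Submodule ℂ H) ∧ Copyable (⇑e) (⊤ : Submodule ℂ H) ∧
      ∀ K L : Submodule ℂ H, Copyable (⇑e) K → Copyable (⇑e) L → Copyable (⇑e) (K ⊓ L) := by
  classical
  refine ⟨?_, ?_, ?_⟩
  · rw [copyable_iff]
    intro j
    right
    exact projL_eq_zero _ (by rw [Submodule.bot_orthogonal_eq_top]; trivial)
  · rw [copyable_iff]
    intro j
    left
    exact projL_eq_self _ trivial
  · intro K L hK hL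
    rw [copyable_iff] at hK hL ⊢
    intro j
    rcases hK j with h1 | h1
    · rcases hL j with h2 | h2
      · left
        exact projL_eq_self _ ⟨h1 ▸ projL_mem K (e j), h2 ▸ projL_mem L (e j)⟩
      · right
        apply projL_eq_zero
        have hmem : e j ∈ Lᗮ := by
          have hs := Submodule.sub_starProjection_mem_orthogonal (K := L) (e j)
          rwa [Submodule.starProjection_apply, ← projL_apply, h2, sub_zero] at hs
        exact Submodule.orthogonal_le inf_le_right hmem
    · right
      apply projL_eq_zero
      have hmem : e j ∈ Kᗮ := by
        have hs := Submodule.sub_starProjection_mem_orthogonal (K := K) (e j)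
        rwa [Submodule.starProjection_apply, ← projL_apply, h1, sub_zero] at hs
      exact Submodule.orthogonal_le inf_le_left hmem
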